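/- Let C ≥ 1. There exists a function f : (0, 1/16) → (0, ∞) with f(t) → 0 as t → 0 such that: for every 0 < ε < 1/16 and every bounded operator E on a complex Banach space Y with E² − E compact, ‖E² − E‖ ≤ ε and ‖E‖ ≤ C, there exists an idempotent Q on Y such that E − Q is compact and ‖E − Q‖ ≤ f(ε). In fact one can take f(ε) = 16(1/2 + C)ε, with Q given by the Riesz projection (1/2πi)∮_{|z−1|=1/2}(zI − E)⁻¹ dz. -/

import Mathlib

section aux

variable {Y : Type} [NormedAddCommGroup Y] [NormedSpace ℂ Y]

lemma compact_mul_right' {f : Y →L[ℂ] Y} (hf : IsCompactOperator f) (g : Y →L[ℂ] Y) :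
    IsCompactOperator (f * g) := by
  simpa [ContinuousLinearMap.mul_def, ContinuousLinearMap.coe_comp'] using hf.comp_clm g

lemma compact_mul_left' {f : Y →L[ℂ] Y} (hf : IsCompactOperator f) (g : Y →L[ℂ] Y) :
    IsCompactOperator (g * f) := by
  simpa [ContinuousLinearMap.mul_def, ContinuousLinearMap.coe_comp'] using hf.clm_comp g

end aux

lemma arith1' (ε q x : ℝ) (hε : 0 < ε) (hε16 : ε ≤ 1/16) (hq0 : 0 < q) (hq1 : q ≤ 1)
    (hx0 : 0 ≤ x) (hx : x ≤ ε * q) : x * (x * (4*x + 3)) ≤ ε * (q * (1/4)) := by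
  have hxe : x ≤ ε := le_trans hx (by nlinarith)
  have h116 : x ≤ 1/16 := by linarith
  have h2 : x * (4*x + 3) ≤ 1/4 := by nlinarith
  have h3 : 0 ≤ x * (4*x+3) := by positivity
  calc x * (x * (4*x+3)) ≤ (ε*q) * (1/4) := mul_le_mul hx h2 h3 (by positivity)
    _ = ε * (q * (1/4)) := by ring

lemma arith2' (C ε q d e n : ℝ) (hC : 1 ≤ C) (hε : 0 < ε) (hε16 : ε ≤ 1/16)
    (hq0 : 0 ≤ q) (hd : d ≤ (4*C+1)*ε*(4/3)*(1-q)) (he : e ≤ C)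
    (h1 : n ≤ d + e) : n ≤ 2*C := by
  nlinarith [mul_nonneg (mul_nonneg (by linarith : (0:ℝ) ≤ 4*C+1) hε.le) hq0,
    mul_nonneg (by linarith : (0:ℝ) ≤ 4*C+1) (by linarith : (0:ℝ) ≤ 1/16 - ε)]

lemma arith3' (C ε q d d' s : ℝ)
    (hd' : d' ≤ (4*C+1)*(ε*q)) (hd : d ≤ (4*C+1)*ε*(4/3)*(1-q))
    (h1 : s ≤ d' + d) : s ≤ (4*C+1)*ε*(4/3)*(1 - q*(1/4)) := by
  nlinarith

lemma arith4' (C ε x : ℝ) (hC : 1 ≤ C) (hε : 0 < ε)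
    (h : x ≤ (4/3)*((4*C+1)*ε)) : x ≤ (16*C+8)*ε := by
  nlinarith

set_option maxHeartbeats 1000000 in
/-- idempotent perturbation lemma. For `C ≥ 1` there is `f : (0,1/16) → (0,∞)`
with `f(t) → 0` as `t → 0` such that whenever `E` is a bounded operator on a complex Banach
space with `E² − E` compact, `‖E² − E‖ ≤ ε < 1/16` and `‖E‖ ≤ C`, there is an idempotent `Q`
with `E − Q` compact and `‖E − Q‖ ≤ f(ε)`. -/
theorem stmt3 (C : ℝ) (hC : 1 ≤ C) :
    ∃ f : ℝ → ℝ,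
      (∀ t ∈ Set.Ioo (0 : ℝ) (1 / 16), 0 < f t) ∧
      Filter.Tendsto f (nhdsWithin 0 (Set.Ioo (0 : ℝ) (1 / 16))) (nhds 0) ∧
      ∀ (Y : Type) [NormedAddCommGroup Y] [NormedSpace ℂ Y] [CompleteSpace Y]
        (ε : ℝ), 0 < ε → ε < 1 / 16 →
        ∀ E : Y →L[ℂ] Y,
          IsCompactOperator (E ∘L E - E) → ‖E ∘L E - E‖ ≤ ε → ‖E‖ ≤ C →
          ∃ Q : Y →L[ℂ] Y, Q ∘L Q = Q ∧ IsCompactOperator (E - Q) ∧ ‖E - Q‖ ≤ f ε := by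
  refine ⟨fun t => (16 * C + 8) * t, ?_, ?_, ?_⟩
  · intro t ht
    have h1 : 0 < t := ht.1
    have := mul_pos (show (0:ℝ) < 16 * C + 8 by linarith) h1
    simpa using this
  · have h : Filter.Tendsto (fun t : ℝ => (16 * C + 8) * t) (nhds 0) (nhds 0) := by
      exact (continuous_id.const_mul (16 * C + 8)).tendsto' 0 0 (by simp)
    exact h.mono_left nhdsWithin_le_nhds
  intro Y _ _ _ ε hε hε16 E hcomp hnorm hE
  -- the Newton-type iteration `a_{n+1} = 3 a_n² - 2 a_n³`
  set a : ℕ → (Y →L[ℂ] Y) :=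
    fun n => Nat.rec E (fun _ x => 3 • (x * x) - 2 • (x * x * x)) n with ha
  have ha0 : a 0 = E := rfl
  have haS : ∀ n, a (n + 1) = 3 • (a n * a n) - 2 • (a n * a n * a n) := fun n => rfl
  -- algebraic identities
  have hstep : ∀ n, a (n + 1) - a n = -((2 • a n - 1) * (a n * a n - a n)) := by
    intro n; rw [haS]; noncomm_ring
  have htrec : ∀ n, a (n + 1) * a (n + 1) - a (n + 1)
      = (a n * a n - a n) * ((a n * a n - a n) * (4 • (a n * a n - a n) - 3 • (1 : Y →L[ℂ] Y))) := by
    intro n; rw [haS]; noncomm_ring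
  have hcomp0 : IsCompactOperator (E * E - E) := hcomp
  have hnorm0 : ‖E * E - E‖ ≤ ε := hnorm
  have hone : ‖(1 : Y →L[ℂ] Y)‖ ≤ 1 := by
    rw [ContinuousLinearMap.one_def]; exact ContinuousLinearMap.norm_id_le
  -- quantitative estimates by induction
  have key : ∀ n, ‖a n * a n - a n‖ ≤ ε * (1 / 4 : ℝ) ^ n ∧
      ‖a n - E‖ ≤ (4 * C + 1) * ε * (4 / 3) * (1 - (1 / 4 : ℝ) ^ n) := by
    intro n
    induction n with
    | zero =>
      constructor
      · simpa [ha0] using hnorm0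
      · simp [ha0]
    | succ n ih =>
      obtain ⟨ht, hd⟩ := ih
      have hq0 : (0 : ℝ) < (1 / 4 : ℝ) ^ n := by positivity
      have hq1 : ((1 / 4 : ℝ)) ^ n ≤ 1 := pow_le_one₀ (by norm_num) (by norm_num)
      have h1 : ‖a n‖ ≤ ‖a n - E‖ + ‖E‖ := by
        simpa using norm_add_le (a n - E) E
      have han : ‖a n‖ ≤ 2 * C :=
        arith2' C ε ((1/4:ℝ)^n) ‖a n - E‖ ‖E‖ ‖a n‖ hC hε hε16.le hq0.le hd hE h1
      have hb : ‖2 • a n - (1 : Y →L[ℂ] Y)‖ ≤ 4 * C + 1 := by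
        refine le_trans (norm_sub_le _ _) ?_
        have h3 : ‖(2 : ℕ) • a n‖ ≤ 2 * ‖a n‖ := by
          simpa using (norm_nsmul_le : ‖(2 : ℕ) • a n‖ ≤ ((2 : ℕ) : ℝ) * ‖a n‖)
        linarith
      constructor
      · -- bound on new defect
        have h2 : ‖a (n + 1) * a (n + 1) - a (n + 1)‖
            ≤ ‖a n * a n - a n‖ * (‖a n * a n - a n‖ * (4 * ‖a n * a n - a n‖ + 3)) := by
          rw [htrec]
          refine le_trans (norm_mul_le _ _) ?_
          refine mul_le_mul_of_nonneg_left ?_ (norm_nonneg _)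
          refine le_trans (norm_mul_le _ _) ?_
          refine mul_le_mul_of_nonneg_left ?_ (norm_nonneg _)
          refine le_trans (norm_sub_le _ _) ?_
          have h3 : ‖(4 : ℕ) • (a n * a n - a n)‖ ≤ 4 * ‖a n * a n - a n‖ := by
            simpa using (norm_nsmul_le : ‖(4 : ℕ) • (a n * a n - a n)‖ ≤ ((4 : ℕ) : ℝ) * ‖a n * a n - a n‖)
          have h4 : ‖(3 : ℕ) • (1 : Y →L[ℂ] Y)‖ ≤ 3 := by
            refine le_trans ?_ (by linarith : 3 * ‖(1 : Y →L[ℂ] Y)‖ ≤ 3)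
            simpa using (norm_nsmul_le : ‖(3 : ℕ) • (1 : Y →L[ℂ] Y)‖ ≤ ((3 : ℕ) : ℝ) * ‖(1 : Y →L[ℂ] Y)‖)
          linarith
        have h5 := arith1' ε ((1/4:ℝ)^n) ‖a n * a n - a n‖ hε hε16.le hq0 hq1
          (norm_nonneg _) ht
        rw [pow_succ]
        calc ‖a (n + 1) * a (n + 1) - a (n + 1)‖
            ≤ ‖a n * a n - a n‖ * (‖a n * a n - a n‖ * (4 * ‖a n * a n - a n‖ + 3)) := h2
          _ ≤ ε * ((1/4:ℝ)^n * (1/4)) := h5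
          _ = ε * ((1/4:ℝ)^n * (1/4)) := rfl
      · -- bound on distance to E
        have h6 : ‖a (n + 1) - a n‖ ≤ (4 * C + 1) * (ε * (1 / 4 : ℝ) ^ n) := by
          rw [hstep, norm_neg]
          refine le_trans (norm_mul_le _ _) ?_
          exact mul_le_mul hb ht (norm_nonneg _) (by linarith)
        have h7 : ‖a (n + 1) - E‖ ≤ ‖a (n + 1) - a n‖ + ‖a n - E‖ := by
          simpa using norm_add_le (a (n + 1) - a n) (a n - E)
        rw [pow_succ]
        exact arith3' C ε ((1/4:ℝ)^n) ‖a n - E‖ ‖a (n+1) - a n‖ ‖a (n+1) - E‖ h6 hd h7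
  -- the sequence is Cauchy
  have hdist : ∀ n, dist (a n) (a (n + 1)) ≤ ((4 * C + 1) * ε) * (1 / 4 : ℝ) ^ n := by
    intro n
    obtain ⟨ht, hd⟩ := key n
    have hq0 : (0 : ℝ) < (1 / 4 : ℝ) ^ n := by positivity
    have h1 : ‖a n‖ ≤ ‖a n - E‖ + ‖E‖ := by
      simpa using norm_add_le (a n - E) E
    have han : ‖a n‖ ≤ 2 * C :=
      arith2' C ε ((1/4:ℝ)^n) ‖a n - E‖ ‖E‖ ‖a n‖ hC hε hε16.le hq0.le hd hE h1
    have hb : ‖2 • a n - (1 : Y →L[ℂ] Y)‖ ≤ 4 * C + 1 := by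
      refine le_trans (norm_sub_le _ _) ?_
      have h3 : ‖(2 : ℕ) • a n‖ ≤ 2 * ‖a n‖ := by
        simpa using (norm_nsmul_le : ‖(2 : ℕ) • a n‖ ≤ ((2 : ℕ) : ℝ) * ‖a n‖)
      have hone : ‖(1 : Y →L[ℂ] Y)‖ ≤ 1 := by
        rw [ContinuousLinearMap.one_def]; exact ContinuousLinearMap.norm_id_le
      linarith
    rw [dist_eq_norm, ← norm_neg, neg_sub]
    calc ‖a (n + 1) - a n‖ ≤ (4 * C + 1) * (ε * (1 / 4 : ℝ) ^ n) := by
          rw [hstep, norm_neg]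
          refine le_trans (norm_mul_le _ _) ?_
          exact mul_le_mul hb ht (norm_nonneg _) (by linarith)
      _ = ((4 * C + 1) * ε) * (1 / 4 : ℝ) ^ n := by ring
  have hcauchy : CauchySeq a :=
    cauchySeq_of_le_geometric (1 / 4) ((4 * C + 1) * ε) (by norm_num) hdist
  obtain ⟨Q, hQ⟩ := cauchySeq_tendsto_of_complete hcauchy
  -- the limit is idempotent
  have htend0 : Filter.Tendsto (fun n => a n * a n - a n) Filter.atTop (nhds 0) := by
    refine squeeze_zero_norm (fun n => (key n).1) ?_
    have := (tendsto_pow_atTop_nhds_zero_of_lt_one (by norm_num : (0:ℝ) ≤ 1/4)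
      (by norm_num : (1/4 : ℝ) < 1)).const_mul ε
    simpa using this
  have htendQ : Filter.Tendsto (fun n => a n * a n - a n) Filter.atTop (nhds (Q * Q - Q)) :=
    (hQ.mul hQ).sub hQ
  have hQQ : Q * Q - Q = 0 := tendsto_nhds_unique htendQ htend0
  have hQidem : Q * Q = Q := by rwa [sub_eq_zero] at hQQ
  -- compactness along the sequence
  have hcompn : ∀ n, IsCompactOperator (a n * a n - a n) ∧ IsCompactOperator (E - a n) := by
    intro n
    induction n with
    | zero =>
      refine ⟨hcomp0, ?_⟩
      rw [ha0, sub_self]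
      exact isCompactOperator_zero
    | succ n ih =>
      obtain ⟨ht, hd⟩ := ih
      constructor
      · rw [htrec]
        exact compact_mul_right' ht _
      · have h1 : E - a (n + 1) = (E - a n) + (2 • a n - 1) * (a n * a n - a n) := by
          have h2 := hstep n
          rw [show E - a (n + 1) = (E - a n) - (a (n + 1) - a n) by abel, h2]
          abel
        rw [h1]
        exact hd.add (compact_mul_left' ht _)
  -- `E - Q` is compact
  have hcompQ : IsCompactOperator (E - Q) := by
    refine isCompactOperator_of_tendsto (l := Filter.atTop)
      (F := fun n => E - a n) (tendsto_const_nhds.sub hQ) ?_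
    exact Filter.Eventually.of_forall fun n => (hcompn n).2
  -- norm estimate
  have hEQ : ‖E - Q‖ ≤ (16 * C + 8) * ε := by
    have h1 : dist (a 0) Q ≤ ((4 * C + 1) * ε) / (1 - 1 / 4) :=
      dist_le_of_le_geometric_of_tendsto₀ (1 / 4) ((4 * C + 1) * ε) (by norm_num) hdist hQ
    rw [ha0, dist_eq_norm] at h1
    have h2 : ((4 * C + 1) * ε) / (1 - 1 / 4) = (4 / 3) * ((4 * C + 1) * ε) := by ring
    rw [h2] at h1
    exact arith4' C ε ‖E - Q‖ hC hε h1
  exact ⟨Q, hQidem, hcompQ, hEQ⟩
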